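/- For every real s > 0 and natural number n ≥ 1, ∏_{k=1}^{n} (k/(s+k)) · ∑_{j=1}^{n} 1/(j+s) = ∑_{k=0}^{n} (-1)^{k+1} C(n,k) · k/(k+s)^2. -/

import Mathlib

open Finset

lemma keyF (n : ℕ) : ∀ x : ℝ, 0 < x →
    ∑ k ∈ Finset.range (n+1), (-1:ℝ)^k * (n.choose k : ℝ) / (x + k)
      = (n.factorial : ℝ) / ∏ k ∈ Finset.range (n+1), (x + k) := by
  induction n with
  | zero => intro x hx; simp
  | succ n ih =>
    intro x hx
    have hx1 : (0:ℝ) < x + 1 := by linarith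
    have hpos : ∀ y : ℝ, 0 < y → (0:ℝ) < ∏ k ∈ Finset.range (n+1), (y + (k:ℕ)) := by
      intro y hy
      apply Finset.prod_pos
      intro i _
      positivity
    have hPx : (∏ k ∈ Finset.range (n+1), (x + (k:ℕ))) ≠ 0 := ne_of_gt (hpos x hx)
    have hPx1 : (∏ k ∈ Finset.range (n+1), ((x+1) + (k:ℕ))) ≠ 0 := ne_of_gt (hpos (x+1) hx1)
    have step1 : ∑ k ∈ Finset.range (n+1+1), (-1:ℝ)^k * ((n+1).choose k : ℝ) / (x + k)
        = (∑ k ∈ Finset.range (n+1), (-1:ℝ)^k * (n.choose k : ℝ) / (x + k))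
          - ∑ k ∈ Finset.range (n+1), (-1:ℝ)^k * (n.choose k : ℝ) / ((x+1) + k) := by
      rw [Finset.sum_range_succ' _ (n+1)]
      have hterm : ∀ i ∈ Finset.range (n+1),
          (-1:ℝ)^(i+1) * (((n+1).choose (i+1) : ℕ) : ℝ) / (x + ((i+1 : ℕ):ℝ))
          = ((-1:ℝ)^(i+1) * (n.choose (i+1) : ℝ) / (x + ((i+1:ℕ):ℝ)))
            + (-((-1:ℝ)^i * (n.choose i : ℝ) / ((x+1) + (i:ℝ)))) := by
        intro i _
        rw [Nat.choose_succ_succ]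
        push_cast
        have h1 : x + ((i:ℝ)+1) ≠ 0 := by positivity
        have h2 : (x+1) + (i:ℝ) ≠ 0 := by positivity
        field_simp
        ring
      rw [Finset.sum_congr rfl hterm, Finset.sum_add_distrib, Finset.sum_neg_distrib]
      have hfirst : (∑ i ∈ Finset.range (n+1), (-1:ℝ)^(i+1) * (n.choose (i+1) : ℝ) / (x + ((i+1:ℕ):ℝ)))
          + (-1:ℝ)^0 * (((n+1).choose 0 : ℕ) : ℝ) / (x + ((0:ℕ):ℝ))
          = ∑ k ∈ Finset.range (n+1), (-1:ℝ)^k * (n.choose k : ℝ) / (x + k) := by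
        rw [Finset.sum_range_succ, Nat.choose_succ_self]
        rw [Finset.sum_range_succ' (fun k => (-1:ℝ)^k * (n.choose k : ℝ) / (x + k)) n]
        simp
      linarith [hfirst]
    rw [step1, ih x hx, ih (x+1) hx1]
    have hQ2 : (∏ k ∈ Finset.range (n+1+1), (x + (k:ℕ)))
        = (∏ k ∈ Finset.range (n+1), ((x+1) + (k:ℕ))) * x := by
      rw [Finset.prod_range_succ' (fun k => (x + (k:ℕ))) (n+1)]
      push_cast
      rw [add_zero]
      congr 1
      apply Finset.prod_congr rfl
      intro i _
      ring
    have hQ1 : (∏ k ∈ Finset.range (n+1+1), (x + (k:ℕ)))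
        = (∏ k ∈ Finset.range (n+1), (x + (k:ℕ))) * (x + ((n+1:ℕ):ℝ)) := by
      rw [Finset.prod_range_succ]
    have hrel : (∏ k ∈ Finset.range (n+1), ((x+1) + (k:ℕ))) * x
        = (∏ k ∈ Finset.range (n+1), (x + (k:ℕ))) * (x + ((n+1:ℕ):ℝ)) :=
      hQ2.symm.trans hQ1
    rw [hQ1]
    have hxn : x + ((n+1:ℕ):ℝ) ≠ 0 := by positivity
    have hxne : x ≠ 0 := ne_of_gt hx
    rw [div_sub_div _ _ hPx hPx1, div_eq_div_iff (by exact mul_ne_zero hPx hPx1) (by exact mul_ne_zero hPx hxn)]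
    push_cast [Nat.factorial_succ] at hrel ⊢
    linear_combination ((n.factorial : ℝ) * (∏ k ∈ Finset.range (n+1), (x + (k:ℕ)))) * hrel

lemma key2 (n : ℕ) (x : ℝ) (hx : 0 < x) :
    ∑ k ∈ Finset.range (n+1), (-1:ℝ)^k * (n.choose k : ℝ) * (x / (x + k))
      = ∏ k ∈ Finset.Icc 1 n, ((k:ℝ) / (x + k)) := by
  have h1 : ∑ k ∈ Finset.range (n+1), (-1:ℝ)^k * (n.choose k : ℝ) * (x / (x + k))
      = x * ∑ k ∈ Finset.range (n+1), (-1:ℝ)^k * (n.choose k : ℝ) / (x + k) := by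
    rw [Finset.mul_sum]
    apply Finset.sum_congr rfl
    intro i _
    ring
  rw [h1, keyF n x hx]
  have hfac : (∏ k ∈ Finset.Icc 1 n, (k:ℝ)) = (n.factorial : ℝ) := by
    rw [← Nat.cast_prod, ← Finset.Ico_add_one_right_eq_Icc, Finset.prod_Ico_id_eq_factorial]
  have hprod : (∏ k ∈ Finset.range (n+1), (x + (k:ℕ)))
      = x * ∏ k ∈ Finset.Icc 1 n, (x + (k:ℕ)) := by
    rw [Finset.prod_range_succ' (fun k => (x + (k:ℕ))) n]
    rw [← Finset.Ico_add_one_right_eq_Icc, Finset.prod_Ico_eq_prod_range]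
    push_cast
    rw [add_zero, mul_comm]
    congr 1
    exact Finset.prod_congr rfl fun i _ => by ring
  have hB : (∏ k ∈ Finset.Icc 1 n, (x + (k:ℕ))) ≠ 0 := by
    apply ne_of_gt
    apply Finset.prod_pos
    intro i _
    positivity
  rw [Finset.prod_div_distrib, hfac, hprod]
  field_simp

theorem stmt_11 (s : ℝ) (hs : 0 < s) (n : ℕ) (hn : 1 ≤ n) :
    (∏ k ∈ Finset.Icc 1 n, ((k : ℝ) / (s + k))) * ∑ j ∈ Finset.Icc 1 n, 1 / ((j : ℝ) + s) =
      ∑ k ∈ Finset.range (n + 1), (-1 : ℝ) ^ (k + 1) * (n.choose k : ℝ) * (k / ((k : ℝ) + s) ^ 2) := by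
  classical
  have hsk : ∀ k : ℕ, s + (k:ℝ) ≠ 0 := by
    intro k
    positivity
  set u : ℝ → ℝ := fun x => ∑ k ∈ Finset.range (n+1), (-1:ℝ)^k * (n.choose k : ℝ) * (x / (x + k)) with hu_def
  set v : ℝ → ℝ := fun x => ∏ k ∈ Finset.Icc 1 n, ((k:ℝ) / (x + k)) with hv_def
  set U : ℝ := ∑ k ∈ Finset.range (n+1), (-1:ℝ)^k * (n.choose k : ℝ) * ((k:ℝ) / (s + k)^2) with hU_def
  have hu : HasDerivAt u U s := by
    apply HasDerivAt.fun_sum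
    intro k _
    have hdiv : HasDerivAt (fun x : ℝ => x / (x + (k:ℝ))) ((k:ℝ)/(s+(k:ℝ))^2) s := by
      have h := (hasDerivAt_id' s).fun_div ((hasDerivAt_id' s).add_const (k:ℝ)) (hsk k)
      refine h.congr_deriv ?_
      ring
    exact hdiv.const_mul _
  set V : ℝ := ∑ i ∈ Finset.Icc 1 n, (∏ j ∈ (Finset.Icc 1 n).erase i, ((j:ℝ)/(s+j))) • (-(i:ℝ)/(s+(i:ℝ))^2) with hV_def
  have hv : HasDerivAt v V s := by
    apply HasDerivAt.fun_finsetProd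
    intro i _
    have h := (hasDerivAt_const s (i:ℝ)).fun_div ((hasDerivAt_id' s).add_const (i:ℝ)) (hsk i)
    convert h using 1
    ring
  have hV : V = -(v s * ∑ j ∈ Finset.Icc 1 n, 1 / ((j:ℝ) + s)) := by
    rw [hV_def, ← neg_eq_iff_eq_neg, ← Finset.sum_neg_distrib, Finset.mul_sum]
    apply Finset.sum_congr rfl
    intro i hi
    have hi1 : 1 ≤ i := (Finset.mem_Icc.mp hi).1
    have hipos : (0:ℝ) < (i:ℝ) := by exact_mod_cast hi1
    have hfi : ((i:ℝ)/(s+i)) ≠ 0 := div_ne_zero (ne_of_gt hipos) (hsk i)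
    have hpe : (∏ j ∈ (Finset.Icc 1 n).erase i, ((j:ℝ)/(s+j))) * ((i:ℝ)/(s+i)) = v s :=
      Finset.prod_erase_mul _ _ hi
    rw [smul_eq_mul, ← hpe]
    have h1 : s + (i:ℝ) ≠ 0 := hsk i
    field_simp
    ring
  have hEq : u =ᶠ[nhds s] v := by
    filter_upwards [isOpen_Ioi.mem_nhds hs] with x hx
    exact key2 n x hx
  have hUV : U = V := by rw [← hu.deriv, ← hv.deriv]; exact hEq.deriv_eq
  have hfin : v s * (∑ j ∈ Finset.Icc 1 n, 1 / ((j:ℝ) + s)) = -U := by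
    rw [hUV, hV]; ring
  calc (∏ k ∈ Finset.Icc 1 n, ((k : ℝ) / (s + k))) * ∑ j ∈ Finset.Icc 1 n, 1 / ((j : ℝ) + s)
      = v s * (∑ j ∈ Finset.Icc 1 n, 1 / ((j:ℝ) + s)) := rfl
    _ = -U := hfin
    _ = ∑ k ∈ Finset.range (n + 1), (-1 : ℝ) ^ (k + 1) * (n.choose k : ℝ) * (k / ((k : ℝ) + s) ^ 2) := by
        rw [hU_def, ← Finset.sum_neg_distrib]
        apply Finset.sum_congr rfl
        intro k _
        ring
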